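/- Let ε ∈ (0, 3/4], Y ∈ C^{n1×...×nd} a rank-r tensor in standard form, and for each j ∈ [d] let A_j ∈ C^{mj×nj} be an (ε/4d)-JL embedding of the set S'_j = {y_k^{(j)} ± y_h^{(j)}, y_k^{(j)} ± i y_h^{(j)} : 1 ≤ h < k ≤ r} ∪ {y_k^{(j)} : k ∈ [r]}. Then |‖Y‖² - ‖Y ×_1 A_1 ··· ×_d A_d‖²| ≤ ε(e + e²√(r(r-1)) · max(ε^{d-1}, μ_Y^{d-1})) ‖α‖₂² ≤ ε e²(r+1)‖α‖₂². -/

import Mathlib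

open scoped BigOperators

/-- Squared Euclidean (Frobenius) norm of a tensor. -/
noncomputable def tnsq {ι : Type*} [Fintype ι] (X : ι → ℂ) : ℝ := ∑ i, ‖X i‖ ^ 2

/-- Squared Euclidean norm of a vector. -/
noncomputable def nsq {n : ℕ} (x : Fin n → ℂ) : ℝ := ∑ i, ‖x i‖ ^ 2

/-- `A` is an `ε`-JL embedding of `S ⊆ ℂ^n`. -/
def IsJL {m n : ℕ} (ε : ℝ) (A : Matrix (Fin m) (Fin n) ℂ) (S : Set (Fin n → ℂ)) : Prop :=
  ∀ x ∈ S, ∃ e ∈ Set.Ioo (-ε) ε, nsq (A.mulVec x) = (1 + e) * nsq x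

/-- The multi-mode product `X ×₁ A₁ ×₂ A₂ ⋯ ×_d A_d`. -/
noncomputable def multiProd {d : ℕ} {n m : Fin d → ℕ}
    (A : ∀ j, Matrix (Fin (m j)) (Fin (n j)) ℂ)
    (X : ((i : Fin d) → Fin (n i)) → ℂ) : ((i : Fin d) → Fin (m i)) → ℂ :=
  fun idx => ∑ t : (i : Fin d) → Fin (n i), (∏ j, A j (idx j) (t j)) * X t

/-- The rank-`r` CP tensor `Y = Σ_k α_k ○_ℓ y_k^{(ℓ)}` in standard form. -/
noncomputable def cpTensor {d r : ℕ} {n : Fin d → ℕ} (α : Fin r → ℂ)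
    (y : Fin r → (ℓ : Fin d) → Fin (n ℓ) → ℂ) : ((i : Fin d) → Fin (n i)) → ℂ :=
  fun idx => ∑ k, α k * ∏ ℓ, y k ℓ (idx ℓ)

/-- The mode-`ℓ` coherence `μ_{Y,ℓ} = max_{k ≠ h} |⟨y_k^{(ℓ)}, y_h^{(ℓ)}⟩|`. -/
noncomputable def modeCoh {d r : ℕ} {n : Fin d → ℕ}
    (y : Fin r → (ℓ : Fin d) → Fin (n ℓ) → ℂ) (ℓ : Fin d) : ℝ :=
  ⨆ p : {p : Fin r × Fin r // p.1 ≠ p.2},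
    ‖∑ i, y p.1.1 ℓ i * (starRingEnd ℂ) (y p.1.2 ℓ i)‖

/- ===================== auxiliary machinery ===================== -/

noncomputable def ip {N : ℕ} (u v : Fin N → ℂ) : ℂ := ∑ i, u i * (starRingEnd ℂ) (v i)

lemma ip_self {N : ℕ} (u : Fin N → ℂ) : ip u u = (nsq u : ℂ) := by
  simp only [ip, nsq, Complex.mul_conj, Complex.normSq_eq_norm_sq]
  push_cast
  rfl

lemma ip_conj {N : ℕ} (u v : Fin N → ℂ) : ip v u = (starRingEnd ℂ) (ip u v) := by
  simp [ip]
  exact Finset.sum_congr rfl fun i _ => by ring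

lemma polarization {N : ℕ} (u v : Fin N → ℂ) :
    ip (u+v) (u+v) - ip (u-v) (u-v) + Complex.I * ip (u + Complex.I • v) (u + Complex.I • v)
      - Complex.I * ip (u - Complex.I • v) (u - Complex.I • v) = 4 * ip u v := by
  simp only [ip, Finset.mul_sum, ← Finset.sum_sub_distrib, ← Finset.sum_add_distrib]
  refine Finset.sum_congr rfl fun i _ => ?_
  simp only [Pi.add_apply, Pi.sub_apply, Pi.smul_apply, smul_eq_mul, map_add, map_sub, map_mul,
    Complex.conj_I]
  ring_nf
  rw [Complex.I_sq]
  ring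

lemma parallelogram {N : ℕ} (u v : Fin N → ℂ) :
    ip (u+v) (u+v) + ip (u-v) (u-v) = 2 * ip u u + 2 * ip v v := by
  simp only [ip, Finset.mul_sum, ← Finset.sum_add_distrib]
  refine Finset.sum_congr rfl fun i _ => ?_
  simp only [Pi.add_apply, Pi.sub_apply, map_add, map_sub]
  ring

lemma parallelogramI {N : ℕ} (u v : Fin N → ℂ) :
    ip (u + Complex.I • v) (u + Complex.I • v) + ip (u - Complex.I • v) (u - Complex.I • v)
      = 2 * ip u u + 2 * ip v v := by
  simp only [ip, Finset.mul_sum, ← Finset.sum_add_distrib]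
  refine Finset.sum_congr rfl fun i _ => ?_
  simp only [Pi.add_apply, Pi.sub_apply, Pi.smul_apply, smul_eq_mul, map_add, map_sub, map_mul,
    Complex.conj_I]
  ring_nf
  rw [Complex.I_sq]
  ring

lemma tnsq_cp {d r : ℕ} {n : Fin d → ℕ} (α : Fin r → ℂ)
    (z : Fin r → (ℓ : Fin d) → Fin (n ℓ) → ℂ) :
    tnsq (cpTensor α z) =
      (∑ p : Fin r × Fin r, α p.1 * (starRingEnd ℂ) (α p.2) * ∏ ℓ, ip (z p.1 ℓ) (z p.2 ℓ)).re := by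
  have h1 : tnsq (cpTensor α z)
      = (∑ idx, cpTensor α z idx * (starRingEnd ℂ) (cpTensor α z idx)).re := by
    rw [tnsq, Complex.re_sum]
    refine Finset.sum_congr rfl fun idx _ => ?_
    rw [Complex.mul_conj, Complex.normSq_eq_norm_sq, Complex.ofReal_re]
  rw [h1]
  congr 1
  have h2 : ∀ idx, cpTensor α z idx * (starRingEnd ℂ) (cpTensor α z idx)
      = ∑ p : Fin r × Fin r, (α p.1 * (starRingEnd ℂ) (α p.2)) *
          ∏ ℓ, z p.1 ℓ (idx ℓ) * (starRingEnd ℂ) (z p.2 ℓ (idx ℓ)) := by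
    intro idx
    rw [cpTensor, map_sum, Finset.sum_mul_sum, ← Finset.sum_product', Finset.univ_product_univ]
    refine Finset.sum_congr rfl fun p _ => ?_
    simp only [map_mul, map_prod, Finset.prod_mul_distrib]
    ring
  rw [Finset.sum_congr rfl fun idx _ => h2 idx, Finset.sum_comm]
  refine Finset.sum_congr rfl fun p _ => ?_
  rw [← Finset.mul_sum]
  congr 1
  simp only [ip]
  rw [Fintype.prod_sum]

lemma multiProd_cp {d r : ℕ} {n m : Fin d → ℕ} (α : Fin r → ℂ)
    (y : Fin r → (ℓ : Fin d) → Fin (n ℓ) → ℂ) (A : ∀ j, Matrix (Fin (m j)) (Fin (n j)) ℂ) :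
    multiProd A (cpTensor α y) = cpTensor α (fun k j => (A j).mulVec (y k j)) := by
  funext idx
  simp only [multiProd, cpTensor, Finset.mul_sum]
  rw [Finset.sum_comm]
  refine Finset.sum_congr rfl fun k _ => ?_
  have : ∀ t : (i : Fin d) → Fin (n i), (∏ j, A j (idx j) (t j)) * (α k * ∏ ℓ, y k ℓ (t ℓ))
      = α k * ∏ j, (A j (idx j) (t j) * y k j (t j)) := by
    intro t; rw [Finset.prod_mul_distrib]; ring
  rw [Finset.sum_congr rfl fun t _ => this t, ← Finset.mul_sum]
  congr 1
  simp only [Matrix.mulVec, dotProduct]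
  rw [Fintype.prod_sum]

lemma norm_prod_le_card {ι : Type*} (s : Finset ι) (f : ι → ℂ) (B : ℝ)
    (h : ∀ i ∈ s, ‖f i‖ ≤ B) : ‖∏ i ∈ s, f i‖ ≤ B ^ s.card := by
  calc ‖∏ i ∈ s, f i‖ = ∏ i ∈ s, ‖f i‖ := norm_prod _ _
    _ ≤ ∏ _i ∈ s, B := Finset.prod_le_prod (fun i _ => norm_nonneg _) h
    _ = B ^ s.card := Finset.prod_const B

lemma norm_prod_sub_prod_le {ι : Type*} [DecidableEq ι] (s : Finset ι) (f g : ι → ℂ)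
    (δ M : ℝ) (hδ : 0 ≤ δ) (hM : 0 ≤ M)
    (h1 : ∀ i ∈ s, ‖f i - g i‖ ≤ δ) (h2 : ∀ i ∈ s, ‖g i‖ ≤ M) :
    ‖∏ i ∈ s, f i - ∏ i ∈ s, g i‖ ≤ s.card * δ * (M + δ) ^ (s.card - 1) := by
  induction s using Finset.induction_on with
  | empty => simp
  | @insert a s ha ih =>
    have hfB : ∀ i ∈ s, ‖f i‖ ≤ M + δ := by
      intro i hi
      calc ‖f i‖ = ‖g i + (f i - g i)‖ := by ring_nf
        _ ≤ ‖g i‖ + ‖f i - g i‖ := norm_add_le _ _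
        _ ≤ M + δ := add_le_add (h2 i (Finset.mem_insert_of_mem hi))
            (h1 i (Finset.mem_insert_of_mem hi))
    have hP : ‖∏ i ∈ s, f i‖ ≤ (M + δ) ^ s.card :=
      norm_prod_le_card s f (M + δ) hfB
    have ihs := ih (fun i hi => h1 i (Finset.mem_insert_of_mem hi))
      (fun i hi => h2 i (Finset.mem_insert_of_mem hi))
    rw [Finset.prod_insert ha, Finset.prod_insert ha, Finset.card_insert_of_notMem ha]
    set n := s.card with hn
    have key : f a * ∏ i ∈ s, f i - g a * ∏ i ∈ s, g i
        = (f a - g a) * ∏ i ∈ s, f i + g a * (∏ i ∈ s, f i - ∏ i ∈ s, g i) := by ring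
    have hMd : (0:ℝ) ≤ M + δ := by linarith
    have step2 : ‖g a‖ * ‖∏ i ∈ s, f i - ∏ i ∈ s, g i‖ ≤ n * δ * (M + δ) ^ n := by
      rcases Nat.eq_zero_or_pos n with h0 | hpos
      · rw [h0] at ihs ⊢
        simp only [Nat.cast_zero, zero_mul] at ihs ⊢
        have := norm_nonneg (∏ i ∈ s, f i - ∏ i ∈ s, g i)
        nlinarith [norm_nonneg (g a)]
      · have : (M + δ) ^ (n - 1) * M ≤ (M + δ) ^ n := by
          calc (M + δ) ^ (n - 1) * M ≤ (M + δ) ^ (n - 1) * (M + δ) :=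
            mul_le_mul_of_nonneg_left (by linarith) (pow_nonneg hMd _)
          _ = (M + δ) ^ (n - 1 + 1) := by rw [pow_succ]
          _ = (M + δ) ^ n := by rw [Nat.sub_add_cancel hpos]
        calc ‖g a‖ * ‖∏ i ∈ s, f i - ∏ i ∈ s, g i‖ ≤ M * (n * δ * (M + δ) ^ (n - 1)) :=
            mul_le_mul (h2 a (Finset.mem_insert_self a s)) ihs (norm_nonneg _) hM
          _ = n * δ * ((M + δ) ^ (n - 1) * M) := by ring
          _ ≤ n * δ * (M + δ) ^ n := by
            apply mul_le_mul_of_nonneg_left this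
            positivity
    calc ‖f a * ∏ i ∈ s, f i - g a * ∏ i ∈ s, g i‖
        ≤ ‖(f a - g a) * ∏ i ∈ s, f i‖ + ‖g a * (∏ i ∈ s, f i - ∏ i ∈ s, g i)‖ := by
          rw [key]; exact norm_add_le _ _
      _ = ‖f a - g a‖ * ‖∏ i ∈ s, f i‖ + ‖g a‖ * ‖∏ i ∈ s, f i - ∏ i ∈ s, g i‖ := by
          rw [norm_mul, norm_mul]
      _ ≤ δ * (M + δ) ^ n + n * δ * (M + δ) ^ n := by
          refine add_le_add ?_ step2
          exact mul_le_mul (h1 a (Finset.mem_insert_self a s)) hP (norm_nonneg _) hδ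
      _ ≤ (↑(n + 1)) * δ * (M + δ) ^ (n + 1 - 1) := by
          rw [Nat.add_sub_cancel]
          push_cast
          ring_nf
          exact le_refl _

lemma jl_ip_bound {N M : ℕ} (A : Matrix (Fin M) (Fin N) ℂ) (u v : Fin N → ℂ) (δ : ℝ)
    (hδ : 0 ≤ δ) (hu : nsq u = 1) (hv : nsq v = 1)
    (h : ∀ w ∈ ({u - v, u + v, u - Complex.I • v, u + Complex.I • v} : Set (Fin N → ℂ)),
        ∃ e ∈ Set.Ioo (-δ) δ, nsq (A.mulVec w) = (1 + e) * nsq w) :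
    ‖ip (A.mulVec u) (A.mulVec v) - ip u v‖ ≤ 2 * δ := by
  set D : (Fin N → ℂ) → ℂ := fun w => ((nsq (A.mulVec w) : ℂ) - (nsq w : ℂ)) with hD
  have hDbound : ∀ w ∈ ({u - v, u + v, u - Complex.I • v, u + Complex.I • v} :
      Set (Fin N → ℂ)), ‖D w‖ ≤ δ * nsq w := by
    intro w hw
    obtain ⟨e, he, heq⟩ := h w hw
    have : D w = ((e * nsq w : ℝ) : ℂ) := by
      rw [hD]; push_cast; rw [heq]; push_cast; ring
    rw [this, Complex.norm_real, Real.norm_eq_abs]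
    have hnn : 0 ≤ nsq w := Finset.sum_nonneg fun i _ => by positivity
    have : |e| ≤ δ := by
      rcases he with ⟨h1, h2⟩; rw [abs_le]; constructor <;> linarith
    rw [abs_mul, abs_of_nonneg hnn]
    exact mul_le_mul_of_nonneg_right this hnn
  have key : 4 * (ip (A.mulVec u) (A.mulVec v) - ip u v)
      = D (u + v) - D (u - v) + Complex.I * D (u + Complex.I • v)
        - Complex.I * D (u - Complex.I • v) := by
    have h1 := polarization u v
    have h2 := polarization (A.mulVec u) (A.mulVec v)
    rw [← Matrix.mulVec_smul, ← Matrix.mulVec_add, ← Matrix.mulVec_sub,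
      ← Matrix.mulVec_add, ← Matrix.mulVec_sub] at h2
    rw [ip_self, ip_self, ip_self, ip_self] at h1 h2
    rw [hD]
    linear_combination h1 - h2
  have hsum1 : nsq (u + v) + nsq (u - v) = 4 := by
    have h0 := parallelogram u v
    rw [ip_self, ip_self, ip_self, ip_self, hu, hv] at h0
    push_cast at h0
    have h3 : ((nsq (u+v) + nsq (u-v) : ℝ) : ℂ) = ((4:ℝ) : ℂ) := by
      push_cast
      linear_combination h0
    exact_mod_cast h3
  have hsum2 : nsq (u + Complex.I • v) + nsq (u - Complex.I • v) = 4 := by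
    have h0 := parallelogramI u v
    rw [ip_self, ip_self, ip_self, ip_self, hu, hv] at h0
    push_cast at h0
    have h3 : ((nsq (u + Complex.I • v) + nsq (u - Complex.I • v) : ℝ) : ℂ) = ((4:ℝ) : ℂ) := by
      push_cast
      linear_combination h0
    exact_mod_cast h3
  have h4 : ‖4 * (ip (A.mulVec u) (A.mulVec v) - ip u v)‖ ≤ 8 * δ := by
    rw [key]
    have b1 := hDbound (u + v) (by simp [Set.mem_insert_iff])
    have b2 := hDbound (u - v) (by simp [Set.mem_insert_iff])
    have b3 := hDbound (u + Complex.I • v) (by simp [Set.mem_insert_iff])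
    have b4 := hDbound (u - Complex.I • v) (by simp [Set.mem_insert_iff])
    calc ‖D (u + v) - D (u - v) + Complex.I * D (u + Complex.I • v)
          - Complex.I * D (u - Complex.I • v)‖
        ≤ ‖D (u + v) - D (u - v) + Complex.I * D (u + Complex.I • v)‖
          + ‖Complex.I * D (u - Complex.I • v)‖ := norm_sub_le _ _
      _ ≤ ‖D (u + v) - D (u - v)‖ + ‖Complex.I * D (u + Complex.I • v)‖
          + ‖Complex.I * D (u - Complex.I • v)‖ := by
            gcongr
            exact norm_add_le _ _
      _ ≤ ‖D (u + v)‖ + ‖D (u - v)‖ + ‖Complex.I * D (u + Complex.I • v)‖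
          + ‖Complex.I * D (u - Complex.I • v)‖ := by
            gcongr
            exact norm_sub_le _ _
      _ = ‖D (u + v)‖ + ‖D (u - v)‖ + ‖D (u + Complex.I • v)‖ + ‖D (u - Complex.I • v)‖ := by
            rw [norm_mul, norm_mul, Complex.norm_I, one_mul, one_mul]
      _ ≤ δ * nsq (u + v) + δ * nsq (u - v) + δ * nsq (u + Complex.I • v)
          + δ * nsq (u - Complex.I • v) := by gcongr
      _ = 8 * δ := by nlinarith [hsum1, hsum2]
  rw [norm_mul] at h4
  have h5 : ‖(4:ℂ)‖ = 4 := by norm_num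
  rw [h5] at h4
  linarith

set_option maxHeartbeats 1000000 in
/-- Let `ε ∈ (0, 3/4]`, `Y` a rank-`r` tensor in standard form, and for each `j ∈ [d]`
let `A_j` be an `(ε/4d)`-JL embedding of
`S'_j = {y_k^{(j)} ± y_h^{(j)}, y_k^{(j)} ± i y_h^{(j)} : h < k} ∪ {y_k^{(j)}}`.  Then
`|‖Y‖² - ‖Y ×₁ A₁ ⋯ ×_d A_d‖²|
  ≤ ε(e + e²√(r(r-1))·max(ε^{d-1}, μ_Y^{d-1}))‖α‖₂² ≤ ε e²(r+1)‖α‖₂²`. -/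
theorem modewise_jl_cp_embedding {d r : ℕ} {n m : Fin d → ℕ} {ε : ℝ}
    (hε : ε ∈ Set.Ioc (0 : ℝ) (3 / 4)) (α : Fin r → ℂ)
    (y : Fin r → (ℓ : Fin d) → Fin (n ℓ) → ℂ)
    (hnorm : ∀ k ℓ, ∑ i, ‖y k ℓ i‖ ^ 2 = (1 : ℝ))
    (A : ∀ j, Matrix (Fin (m j)) (Fin (n j)) ℂ)
    (hA : ∀ j, IsJL (ε / (4 * d)) (A j)
      ({v | ∃ k h : Fin r, h < k ∧
          (v = y k j - y h j ∨ v = y k j + y h j ∨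
           v = y k j - Complex.I • y h j ∨ v = y k j + Complex.I • y h j)} ∪
        Set.range fun k => y k j)) :
    |tnsq (cpTensor α y) - tnsq (multiProd A (cpTensor α y))| ≤
        ε * (Real.exp 1 + Real.exp 2 * Real.sqrt ((r : ℝ) * ((r : ℝ) - 1)) *
          max (ε ^ (d - 1)) ((⨆ ℓ, modeCoh y ℓ) ^ (d - 1))) * (∑ k, ‖α k‖ ^ 2) ∧
      ε * (Real.exp 1 + Real.exp 2 * Real.sqrt ((r : ℝ) * ((r : ℝ) - 1)) *
          max (ε ^ (d - 1)) ((⨆ ℓ, modeCoh y ℓ) ^ (d - 1))) * (∑ k, ‖α k‖ ^ 2) ≤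
        ε * Real.exp 2 * ((r : ℝ) + 1) * (∑ k, ‖α k‖ ^ 2) := by
  obtain ⟨hε0, hε34⟩ := hε
  set μ : ℝ := ⨆ ℓ, modeCoh y ℓ with hμdef
  set M : ℝ := max ε μ with hMdef
  set S : ℝ := ∑ k, ‖α k‖ ^ 2 with hSdef
  have hS0 : 0 ≤ S := Finset.sum_nonneg fun k _ => by positivity
  have hμ0 : 0 ≤ μ := Real.iSup_nonneg fun ℓ => Real.iSup_nonneg fun p => norm_nonneg _
  have hεM : ε ≤ M := le_max_left _ _
  have hM0 : (0:ℝ) ≤ M := le_trans hε0.le hεM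
  have hnsq : ∀ k ℓ, nsq (y k ℓ) = 1 := fun k ℓ => hnorm k ℓ
  set c : Fin d → Fin r → Fin r → ℂ := fun ℓ k h => ip (y k ℓ) (y h ℓ) with hcdef
  set W : Fin r → (ℓ : Fin d) → Fin (m ℓ) → ℂ := fun k ℓ => (A ℓ).mulVec (y k ℓ) with hWdef
  set C : Fin d → Fin r → Fin r → ℂ := fun ℓ k h => ip (W k ℓ) (W h ℓ) with hCdef
  have hcμ : ∀ (ℓ : Fin d) (k h : Fin r), k ≠ h → ‖c ℓ k h‖ ≤ μ := by
    intro ℓ k h hkh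
    have h1 : ‖c ℓ k h‖ ≤ modeCoh y ℓ := by
      rw [modeCoh]
      exact le_ciSup (f := fun p : {p : Fin r × Fin r // p.1 ≠ p.2} =>
          ‖∑ i, y p.1.1 ℓ i * (starRingEnd ℂ) (y p.1.2 ℓ i)‖)
        (Set.Finite.bddAbove (Set.finite_range _)) ⟨(k, h), hkh⟩
    exact h1.trans (le_ciSup (f := fun ℓ => modeCoh y ℓ)
      (Set.Finite.bddAbove (Set.finite_range _)) ℓ)
  have hc1 : ∀ (ℓ : Fin d) (k : Fin r), c ℓ k k = 1 := by
    intro ℓ k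
    rw [hcdef]
    simp only [ip_self, hnsq, Complex.ofReal_one]
  have hF3 : ∀ (ℓ : Fin d) (k : Fin r), ‖C ℓ k k - 1‖ ≤ ε / (4 * d) := by
    intro ℓ k
    obtain ⟨e, he, heq⟩ := hA ℓ (y k ℓ) (Or.inr ⟨k, rfl⟩)
    have h1 : C ℓ k k = ((1 + e : ℝ) : ℂ) := by
      rw [hCdef]
      simp only
      rw [hWdef, ip_self, heq, hnsq, mul_one]
    rw [h1]
    have h2 : ((1 + e : ℝ) : ℂ) - 1 = ((e : ℝ) : ℂ) := by push_cast; ring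
    rw [h2, Complex.norm_real, Real.norm_eq_abs, abs_le]
    exact ⟨by linarith [he.1], by linarith [he.2]⟩
  have hF4' : ∀ (ℓ : Fin d) (k h : Fin r), h < k → ‖C ℓ k h - c ℓ k h‖ ≤ ε / (2 * d) := by
    intro ℓ k h hlt
    have hd : 0 < d := ℓ.pos
    have hb := jl_ip_bound (A ℓ) (y k ℓ) (y h ℓ) (ε / (4 * d)) (by positivity)
      (hnsq k ℓ) (hnsq h ℓ) ?_
    · have heq : 2 * (ε / (4 * d)) = ε / (2 * d) := by
        have hdne : (d:ℝ) ≠ 0 := Nat.cast_ne_zero.2 hd.ne'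
        field_simp
        ring
      rw [← heq]
      exact hb
    · intro w hw
      refine hA ℓ w (Or.inl ⟨k, h, hlt, ?_⟩)
      simp only [Set.mem_insert_iff, Set.mem_singleton_iff] at hw
      tauto
  have hF4 : ∀ (ℓ : Fin d) (k h : Fin r), k ≠ h → ‖C ℓ k h - c ℓ k h‖ ≤ ε / (2 * d) := by
    intro ℓ k h hkh
    rcases lt_or_gt_of_ne hkh with hlt | hlt
    · have heq : C ℓ k h - c ℓ k h = (starRingEnd ℂ) (C ℓ h k - c ℓ h k) := by
        rw [map_sub, hCdef, hcdef]
        simp only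
        rw [← ip_conj, ← ip_conj]
      rw [heq, RCLike.norm_conj]
      exact hF4' ℓ h k hlt
    · exact hF4' ℓ k h hlt
  have hT : tnsq (cpTensor α y) - tnsq (multiProd A (cpTensor α y))
      = (∑ p : Fin r × Fin r, α p.1 * (starRingEnd ℂ) (α p.2) *
          (∏ ℓ, c ℓ p.1 p.2 - ∏ ℓ, C ℓ p.1 p.2)).re := by
    rw [tnsq_cp α y, multiProd_cp α y A, tnsq_cp α _, ← Complex.sub_re,
      ← Finset.sum_sub_distrib]
    congr 1
    refine Finset.sum_congr rfl fun p _ => ?_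
    rw [hcdef, hCdef, hWdef]
    ring
  set E : Fin r × Fin r → ℝ :=
    fun p => ‖α p.1‖ * ‖α p.2‖ * ‖∏ ℓ, c ℓ p.1 p.2 - ∏ ℓ, C ℓ p.1 p.2‖ with hEdef
  have habs : |tnsq (cpTensor α y) - tnsq (multiProd A (cpTensor α y))|
      ≤ ∑ p : Fin r × Fin r, E p := by
    rw [hT]
    calc |(∑ p : Fin r × Fin r, α p.1 * (starRingEnd ℂ) (α p.2) *
            (∏ ℓ, c ℓ p.1 p.2 - ∏ ℓ, C ℓ p.1 p.2)).re|
        ≤ ‖∑ p : Fin r × Fin r, α p.1 * (starRingEnd ℂ) (α p.2) *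
            (∏ ℓ, c ℓ p.1 p.2 - ∏ ℓ, C ℓ p.1 p.2)‖ := by
          exact Complex.abs_re_le_norm _
      _ ≤ ∑ p : Fin r × Fin r, ‖α p.1 * (starRingEnd ℂ) (α p.2) *
            (∏ ℓ, c ℓ p.1 p.2 - ∏ ℓ, C ℓ p.1 p.2)‖ := norm_sum_le _ _
      _ = ∑ p : Fin r × Fin r, E p := by
          refine Finset.sum_congr rfl fun p _ => ?_
          rw [hEdef]
          simp only
          rw [norm_mul, norm_mul, RCLike.norm_conj]
  set D1 : ℝ := (d:ℝ) * (ε / (4 * d)) * (1 + ε / (4 * d)) ^ (d - 1) with hD1def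
  set D2 : ℝ := (d:ℝ) * (ε / (2 * d)) * (M + ε / (2 * d)) ^ (d - 1) with hD2def
  have hD1nn : 0 ≤ D1 := by
    rw [hD1def]; positivity
  have hD2nn : 0 ≤ D2 := by
    rw [hD2def]
    have : (0:ℝ) ≤ M + ε / (2 * d) := by positivity
    positivity
  have hdiag : ∀ k : Fin r, ‖∏ ℓ, c ℓ k k - ∏ ℓ, C ℓ k k‖ ≤ D1 := by
    intro k
    rw [norm_sub_rev]
    have h1 : ∏ ℓ, c ℓ k k = 1 := by
      rw [Finset.prod_congr rfl fun ℓ _ => hc1 ℓ k, Finset.prod_const_one]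
    rw [h1]
    have h2 := norm_prod_sub_prod_le (Finset.univ : Finset (Fin d)) (fun ℓ => C ℓ k k)
      (fun _ => (1:ℂ)) (ε / (4 * d)) 1 (by positivity) zero_le_one
      (fun ℓ _ => hF3 ℓ k) (fun ℓ _ => by norm_num)
    simpa [Finset.card_univ] using h2
  have hoffd : ∀ p : Fin r × Fin r, p.1 ≠ p.2 →
      ‖∏ ℓ, c ℓ p.1 p.2 - ∏ ℓ, C ℓ p.1 p.2‖ ≤ D2 := by
    intro p hp
    rw [norm_sub_rev]
    have h2 := norm_prod_sub_prod_le (Finset.univ : Finset (Fin d)) (fun ℓ => C ℓ p.1 p.2)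
      (fun ℓ => c ℓ p.1 p.2) (ε / (2 * d)) M (by positivity) hM0
      (fun ℓ _ => hF4 ℓ p.1 p.2 hp) (fun ℓ _ => (hcμ ℓ p.1 p.2 hp).trans (le_max_right _ _))
    simpa [Finset.card_univ] using h2
  have hD1le : D1 ≤ ε * Real.exp 1 := by
    rcases Nat.eq_zero_or_pos d with hd0 | hd
    · rw [hD1def, hd0]
      simp only [Nat.cast_zero, zero_mul]
      positivity
    · have hdR : (0:ℝ) < d := Nat.cast_pos.2 hd
      have e1 : (d:ℝ) * (ε / (4 * d)) = ε / 4 := by field_simp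
      have e2 : (0:ℝ) ≤ 1 + ε / (4 * d) := by positivity
      have e3 : (1 + ε / (4 * d)) ^ (d - 1) ≤ Real.exp (ε / (4 * d)) ^ (d - 1) := by
        apply pow_le_pow_left₀ e2
        linarith [Real.add_one_le_exp (ε / (4 * d))]
      have e4 : Real.exp (ε / (4 * d)) ^ (d - 1)
          = Real.exp (((d - 1 : ℕ) : ℝ) * (ε / (4 * d))) := by
        rw [← Real.exp_nat_mul]
      have e5 : ((d - 1 : ℕ) : ℝ) * (ε / (4 * d)) ≤ 1 := by
        have h1 : ((d - 1 : ℕ) : ℝ) ≤ (d:ℝ) := by exact_mod_cast Nat.sub_le d 1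
        have h2 : ((d - 1 : ℕ) : ℝ) * (ε / (4 * d)) ≤ (d:ℝ) * (ε / (4 * d)) :=
          mul_le_mul_of_nonneg_right h1 (by positivity)
        rw [e1] at h2
        linarith
      have e6 : (1 + ε / (4 * d)) ^ (d - 1) ≤ Real.exp 1 := by
        calc (1 + ε / (4 * d)) ^ (d - 1) ≤ Real.exp (ε / (4 * d)) ^ (d - 1) := e3
          _ = Real.exp (((d - 1 : ℕ) : ℝ) * (ε / (4 * d))) := e4
          _ ≤ Real.exp 1 := Real.exp_le_exp.2 e5
      calc D1 = (ε / 4) * (1 + ε / (4 * d)) ^ (d - 1) := by rw [hD1def, e1]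
        _ ≤ (ε / 4) * Real.exp 1 := mul_le_mul_of_nonneg_left e6 (by positivity)
        _ ≤ ε * Real.exp 1 := by nlinarith [Real.exp_pos 1]
  have hD2le : D2 ≤ ε * Real.exp 2 * M ^ (d - 1) := by
    rcases Nat.eq_zero_or_pos d with hd0 | hd
    · rw [hD2def, hd0]
      simp only [Nat.cast_zero, zero_mul]
      have h1 : (0:ℝ) ≤ M ^ (0 - 1) := pow_nonneg hM0 _
      exact mul_nonneg (mul_nonneg hε0.le (Real.exp_pos 2).le) h1
    · have hdR : (0:ℝ) < d := Nat.cast_pos.2 hd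
      have e1 : (d:ℝ) * (ε / (2 * d)) = ε / 2 := by field_simp
      have e2 : M + ε / (2 * d) ≤ M * Real.exp (1 / (2 * d)) := by
        have h1 : ε / (2 * d) ≤ M / (2 * d) := by gcongr
        have h2 : M * (1 + 1 / (2 * (d:ℝ))) ≤ M * Real.exp (1 / (2 * d)) :=
          mul_le_mul_of_nonneg_left (by linarith [Real.add_one_le_exp (1 / (2 * (d:ℝ)))]) hM0
        have h3 : M + M / (2 * (d:ℝ)) = M * (1 + 1 / (2 * (d:ℝ))) := by ring
        linarith
      have e3 : (M + ε / (2 * d)) ^ (d - 1) ≤ (M * Real.exp (1 / (2 * d))) ^ (d - 1) :=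
        pow_le_pow_left₀ (by positivity) e2 _
      have e4 : (M * Real.exp (1 / (2 * d))) ^ (d - 1)
          = M ^ (d - 1) * Real.exp (((d - 1 : ℕ) : ℝ) * (1 / (2 * d))) := by
        rw [mul_pow, ← Real.exp_nat_mul]
      have e5 : ((d - 1 : ℕ) : ℝ) * (1 / (2 * d)) ≤ 2 := by
        have h1 : ((d - 1 : ℕ) : ℝ) ≤ (d:ℝ) := by exact_mod_cast Nat.sub_le d 1
        have h2 : ((d - 1 : ℕ) : ℝ) * (1 / (2 * d)) ≤ (d:ℝ) * (1 / (2 * d)) :=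
          mul_le_mul_of_nonneg_right h1 (by positivity)
        have h3 : (d:ℝ) * (1 / (2 * d)) = 1 / 2 := by
          field_simp
        linarith
      have e6 : (M + ε / (2 * d)) ^ (d - 1) ≤ M ^ (d - 1) * Real.exp 2 := by
        calc (M + ε / (2 * d)) ^ (d - 1) ≤ (M * Real.exp (1 / (2 * d))) ^ (d - 1) := e3
          _ = M ^ (d - 1) * Real.exp (((d - 1 : ℕ) : ℝ) * (1 / (2 * d))) := e4
          _ ≤ M ^ (d - 1) * Real.exp 2 :=
            mul_le_mul_of_nonneg_left (Real.exp_le_exp.2 e5) (pow_nonneg hM0 _)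
      calc D2 = (ε / 2) * (M + ε / (2 * d)) ^ (d - 1) := by rw [hD2def, e1]
        _ ≤ (ε / 2) * (M ^ (d - 1) * Real.exp 2) :=
            mul_le_mul_of_nonneg_left e6 (by positivity)
        _ ≤ ε * (M ^ (d - 1) * Real.exp 2) :=
            mul_le_mul_of_nonneg_right (by linarith)
              (mul_nonneg (pow_nonneg hM0 _) (Real.exp_pos 2).le)
        _ = ε * Real.exp 2 * M ^ (d - 1) := by ring
  have hMpow : M ^ (d - 1) = max (ε ^ (d - 1)) (μ ^ (d - 1)) := by
    rcases le_total ε μ with h | h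
    · rw [hMdef, max_eq_right h, max_eq_right (pow_le_pow_left₀ hε0.le h _)]
    · rw [hMdef, max_eq_left h, max_eq_left (pow_le_pow_left₀ hμ0 h _)]
  have hsplit : ∑ p : Fin r × Fin r, E p
      = (∑ k : Fin r, E (k, k)) + ∑ p ∈ Finset.univ.offDiag, E p := by
    calc ∑ p : Fin r × Fin r, E p
        = ∑ p ∈ (Finset.univ ×ˢ Finset.univ : Finset (Fin r × Fin r)), E p := by
          rw [Finset.univ_product_univ]
      _ = ∑ p ∈ ((Finset.univ : Finset (Fin r)).diag ∪ Finset.univ.offDiag), E p := by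
          rw [Finset.diag_union_offDiag]
      _ = (∑ p ∈ (Finset.univ : Finset (Fin r)).diag, E p) + ∑ p ∈ Finset.univ.offDiag, E p :=
          Finset.sum_union (Finset.disjoint_diag_offDiag _)
      _ = (∑ k : Fin r, E (k, k)) + ∑ p ∈ Finset.univ.offDiag, E p := by
          rw [Finset.sum_diag]
  have part1 : (∑ k : Fin r, E (k, k)) ≤ D1 * S := by
    calc (∑ k : Fin r, E (k, k)) ≤ ∑ k : Fin r, ‖α k‖ ^ 2 * D1 := by
          refine Finset.sum_le_sum fun k _ => ?_
          rw [hEdef]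
          simp only
          calc ‖α k‖ * ‖α k‖ * ‖∏ ℓ, c ℓ k k - ∏ ℓ, C ℓ k k‖
              ≤ ‖α k‖ * ‖α k‖ * D1 :=
                mul_le_mul_of_nonneg_left (hdiag k) (by positivity)
            _ = ‖α k‖ ^ 2 * D1 := by ring
      _ = D1 * S := by rw [← Finset.sum_mul, hSdef, mul_comm]
  have hCS : (∑ p ∈ (Finset.univ : Finset (Fin r)).offDiag, ‖α p.1‖ * ‖α p.2‖)
      ≤ Real.sqrt ((r : ℝ) * ((r : ℝ) - 1)) * S := by
    have cs := Real.sum_mul_le_sqrt_mul_sqrt ((Finset.univ : Finset (Fin r)).offDiag)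
      (fun _ => (1:ℝ)) (fun p => ‖α p.1‖ * ‖α p.2‖)
    simp only [one_mul, one_pow] at cs
    have hcard : (∑ _p ∈ (Finset.univ : Finset (Fin r)).offDiag, (1:ℝ))
        = ((r * r - r : ℕ) : ℝ) := by
      rw [Finset.sum_const, nsmul_eq_mul, mul_one, Finset.offDiag_card]
      simp [Finset.card_univ]
    have hle : r ≤ r * r := by
      rcases Nat.eq_zero_or_pos r with h | h
      · simp [h]
      · exact Nat.le_mul_of_pos_left r h
    have hcast : ((r * r - r : ℕ) : ℝ) = (r : ℝ) * ((r : ℝ) - 1) := by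
      push_cast [Nat.cast_sub hle]
      ring
    have hsq2 : Real.sqrt (∑ p ∈ (Finset.univ : Finset (Fin r)).offDiag,
        (‖α p.1‖ * ‖α p.2‖) ^ 2) ≤ S := by
      have h1 : (∑ p ∈ (Finset.univ : Finset (Fin r)).offDiag, (‖α p.1‖ * ‖α p.2‖) ^ 2)
          ≤ ∑ p : Fin r × Fin r, (‖α p.1‖ * ‖α p.2‖) ^ 2 :=
        Finset.sum_le_sum_of_subset_of_nonneg (Finset.subset_univ _)
          (fun _ _ _ => sq_nonneg _)
      have h2 : (∑ p : Fin r × Fin r, (‖α p.1‖ * ‖α p.2‖) ^ 2) = S ^ 2 := by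
        have h3 : ∀ p : Fin r × Fin r, (‖α p.1‖ * ‖α p.2‖) ^ 2 = ‖α p.1‖ ^ 2 * ‖α p.2‖ ^ 2 :=
          fun p => by ring
        rw [Finset.sum_congr rfl fun p _ => h3 p, hSdef, sq (∑ k, ‖α k‖ ^ 2),
          Finset.sum_mul_sum, ← Finset.sum_product', Finset.univ_product_univ]
      calc Real.sqrt (∑ p ∈ (Finset.univ : Finset (Fin r)).offDiag, (‖α p.1‖ * ‖α p.2‖) ^ 2)
          ≤ Real.sqrt (S ^ 2) := Real.sqrt_le_sqrt (h1.trans_eq h2)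
        _ = S := Real.sqrt_sq hS0
    calc (∑ p ∈ (Finset.univ : Finset (Fin r)).offDiag, ‖α p.1‖ * ‖α p.2‖)
        ≤ Real.sqrt (∑ _p ∈ (Finset.univ : Finset (Fin r)).offDiag, (1:ℝ)) *
          Real.sqrt (∑ p ∈ (Finset.univ : Finset (Fin r)).offDiag,
            (‖α p.1‖ * ‖α p.2‖) ^ 2) := cs
      _ ≤ Real.sqrt ((r : ℝ) * ((r : ℝ) - 1)) * S := by
          rw [hcard, hcast]
          exact mul_le_mul_of_nonneg_left hsq2 (Real.sqrt_nonneg _)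
  have part2 : (∑ p ∈ (Finset.univ : Finset (Fin r)).offDiag, E p)
      ≤ D2 * (Real.sqrt ((r : ℝ) * ((r : ℝ) - 1)) * S) := by
    calc (∑ p ∈ (Finset.univ : Finset (Fin r)).offDiag, E p)
        ≤ ∑ p ∈ (Finset.univ : Finset (Fin r)).offDiag, ‖α p.1‖ * ‖α p.2‖ * D2 := by
          refine Finset.sum_le_sum fun p hp => ?_
          have hne : p.1 ≠ p.2 := (Finset.mem_offDiag.1 hp).2.2
          rw [hEdef]
          simp only
          exact mul_le_mul_of_nonneg_left (hoffd p hne) (by positivity)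
      _ = D2 * ∑ p ∈ (Finset.univ : Finset (Fin r)).offDiag, ‖α p.1‖ * ‖α p.2‖ := by
          rw [← Finset.sum_mul, mul_comm]
      _ ≤ D2 * (Real.sqrt ((r : ℝ) * ((r : ℝ) - 1)) * S) :=
          mul_le_mul_of_nonneg_left hCS hD2nn
  have main1 : |tnsq (cpTensor α y) - tnsq (multiProd A (cpTensor α y))| ≤
      ε * (Real.exp 1 + Real.exp 2 * Real.sqrt ((r : ℝ) * ((r : ℝ) - 1)) *
        max (ε ^ (d - 1)) (μ ^ (d - 1))) * S := by
    calc |tnsq (cpTensor α y) - tnsq (multiProd A (cpTensor α y))|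
        ≤ ∑ p : Fin r × Fin r, E p := habs
      _ = (∑ k : Fin r, E (k, k)) + ∑ p ∈ Finset.univ.offDiag, E p := hsplit
      _ ≤ D1 * S + D2 * (Real.sqrt ((r : ℝ) * ((r : ℝ) - 1)) * S) := add_le_add part1 part2
      _ ≤ (ε * Real.exp 1) * S + (ε * Real.exp 2 * M ^ (d - 1)) *
            (Real.sqrt ((r : ℝ) * ((r : ℝ) - 1)) * S) := by
          refine add_le_add (mul_le_mul_of_nonneg_right hD1le hS0)
            (mul_le_mul_of_nonneg_right hD2le ?_)
          positivity
      _ = ε * (Real.exp 1 + Real.exp 2 * Real.sqrt ((r : ℝ) * ((r : ℝ) - 1)) *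
            M ^ (d - 1)) * S := by ring
      _ = ε * (Real.exp 1 + Real.exp 2 * Real.sqrt ((r : ℝ) * ((r : ℝ) - 1)) *
            max (ε ^ (d - 1)) (μ ^ (d - 1))) * S := by rw [hMpow]
  have hμ1 : μ ≤ 1 := by
    refine Real.iSup_le (fun ℓ => ?_) zero_le_one
    refine Real.iSup_le (fun p => ?_) zero_le_one
    calc ‖∑ i, y p.1.1 ℓ i * (starRingEnd ℂ) (y p.1.2 ℓ i)‖
        ≤ ∑ i, ‖y p.1.1 ℓ i * (starRingEnd ℂ) (y p.1.2 ℓ i)‖ := norm_sum_le _ _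
      _ = ∑ i, ‖y p.1.1 ℓ i‖ * ‖y p.1.2 ℓ i‖ := by
          refine Finset.sum_congr rfl fun i _ => ?_
          rw [norm_mul, RCLike.norm_conj]
      _ ≤ Real.sqrt (∑ i, ‖y p.1.1 ℓ i‖ ^ 2) * Real.sqrt (∑ i, ‖y p.1.2 ℓ i‖ ^ 2) :=
          Real.sum_mul_le_sqrt_mul_sqrt _ _ _
      _ = 1 := by rw [hnorm, hnorm, Real.sqrt_one, mul_one]
  have hmax1 : max (ε ^ (d - 1)) (μ ^ (d - 1)) ≤ 1 :=
    max_le (pow_le_one₀ hε0.le (by linarith)) (pow_le_one₀ hμ0 hμ1)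
  have hmax0 : 0 ≤ max (ε ^ (d - 1)) (μ ^ (d - 1)) :=
    le_trans (pow_nonneg hε0.le _) (le_max_left _ _)
  have hsqrtle : Real.sqrt ((r : ℝ) * ((r : ℝ) - 1)) ≤ (r : ℝ) := by
    have h1 : (r : ℝ) * ((r : ℝ) - 1) ≤ (r : ℝ) * (r : ℝ) := by
      nlinarith [Nat.cast_nonneg (α := ℝ) r]
    calc Real.sqrt ((r : ℝ) * ((r : ℝ) - 1)) ≤ Real.sqrt ((r : ℝ) * (r : ℝ)) :=
        Real.sqrt_le_sqrt h1
      _ = (r : ℝ) := Real.sqrt_mul_self (Nat.cast_nonneg r)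
  have key2 : Real.exp 1 + Real.exp 2 * Real.sqrt ((r : ℝ) * ((r : ℝ) - 1)) *
      max (ε ^ (d - 1)) (μ ^ (d - 1)) ≤ Real.exp 2 * ((r : ℝ) + 1) := by
    have h1 : Real.exp 1 ≤ Real.exp 2 := Real.exp_le_exp.2 (by norm_num)
    have h2 : Real.exp 2 * Real.sqrt ((r : ℝ) * ((r : ℝ) - 1)) *
        max (ε ^ (d - 1)) (μ ^ (d - 1)) ≤ Real.exp 2 * (r : ℝ) := by
      rw [mul_assoc]
      refine mul_le_mul_of_nonneg_left ?_ (Real.exp_pos 2).le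
      calc Real.sqrt ((r : ℝ) * ((r : ℝ) - 1)) * max (ε ^ (d - 1)) (μ ^ (d - 1))
          ≤ (r : ℝ) * 1 := mul_le_mul hsqrtle hmax1 hmax0 (Nat.cast_nonneg r)
        _ = (r : ℝ) := mul_one _
    nlinarith
  refine ⟨main1, ?_⟩
  calc ε * (Real.exp 1 + Real.exp 2 * Real.sqrt ((r : ℝ) * ((r : ℝ) - 1)) *
        max (ε ^ (d - 1)) (μ ^ (d - 1))) * S
      ≤ ε * (Real.exp 2 * ((r : ℝ) + 1)) * S :=
        mul_le_mul_of_nonneg_right (mul_le_mul_of_nonneg_left key2 hε0.le) hS0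
    _ = ε * Real.exp 2 * ((r : ℝ) + 1) * S := by ring
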